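/- arXiv:0906.3682 — 4 statements merged into one kernel-verified Lean document; each statement's English description precedes it below -/
import Mathlib

section
/- Let ρ > 0, τ ∈ [0,1), β ≥ 1, ω = (1−τ²)/(1+τ²ρ), and χ = √((β−1)²ω²ρ² + 2(1+β)ωρ + 1). Define γ = (ω/2)ρ(β−1) + χ/2 − 1/2. Then γ ≥ 0, and when β = 1 it simplifies to γ = −1/2 + √(ωρ + 1/4). -/
/-- The deterministic-equivalent SINR `γ` of optimal RZF is nonnegative, and for `β = 1`
it simplifies to `−1/2 + √(ωρ + 1/4)`. -/
theorem orzf_sinr_nonneg_and_beta_one (ρ τ β : ℝ) (hρ : 0 < ρ)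
    (hτ0 : 0 ≤ τ) (hτ1 : τ < 1) (hβ : 1 ≤ β) :
    let ω := (1 - τ ^ 2) / (1 + τ ^ 2 * ρ)
    let χ := Real.sqrt ((β - 1) ^ 2 * ω ^ 2 * ρ ^ 2 + 2 * (1 + β) * ω * ρ + 1)
    let γ := (ω / 2) * ρ * (β - 1) + χ / 2 - 1 / 2
    0 ≤ γ ∧ (β = 1 → γ = -(1 / 2) + Real.sqrt (ω * ρ + 1 / 4)) := by
  intro ω χ γ
  have hτ2 : τ ^ 2 < 1 := by nlinarith
  have hω : 0 ≤ ω := by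
    apply div_nonneg (by nlinarith) (by nlinarith)
  have hχ : 1 - ω * ρ * (β - 1) ≤ χ := by
    have h1 : (1 - ω * ρ * (β - 1)) ^ 2 ≤
        (β - 1) ^ 2 * ω ^ 2 * ρ ^ 2 + 2 * (1 + β) * ω * ρ + 1 := by
      nlinarith [mul_nonneg hω hρ.le]
    calc 1 - ω * ρ * (β - 1) ≤ |1 - ω * ρ * (β - 1)| := le_abs_self _
      _ = Real.sqrt ((1 - ω * ρ * (β - 1)) ^ 2) := (Real.sqrt_sq_eq_abs _).symm
      _ ≤ χ := Real.sqrt_le_sqrt h1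
  constructor
  · show 0 ≤ (ω / 2) * ρ * (β - 1) + χ / 2 - 1 / 2
    linarith
  · intro hβ1
    show (ω / 2) * ρ * (β - 1) + χ / 2 - 1 / 2 = -(1 / 2) + Real.sqrt (ω * ρ + 1 / 4)
    subst hβ1
    have : χ = Real.sqrt (4 * (ω * ρ + 1 / 4)) := by
      show Real.sqrt _ = _
      ring_nf
    rw [this, show (4 : ℝ) * (ω * ρ + 1 / 4) = 2 ^ 2 * (ω * ρ + 1 / 4) by ring,
      Real.sqrt_mul (by positivity), Real.sqrt_sq (by norm_num : (0:ℝ) ≤ 2)]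
    ring
end

section
/- Let ρ > 0, β > 1, τ ∈ [0,1). For zero-forcing precoding the deterministic-equivalent per-user rate loss is ΔR(τ) = log₂((1 + ρ(β−1))/(1 + (1−τ²)(β−1)/(τ² + 1/ρ))). Given b > 1, the equation ΔR(τ) = log₂ b has the solution τ² = φ/ρ with φ = (b−1)(1 + ρ(β−1)) / (1 − b + (β−1)(ρ + b)), provided the denominator is positive. -/
/-- Feedback scaling for ZF (Theorem 6): with `τ² = φ/ρ`,
`φ = (b−1)(1 + ρ(β−1))/(1 − b + (β−1)(ρ + b))`, the per-user rate gap
`ΔR = log₂((1 + ρ(β−1))/(1 + (1−τ²)(β−1)/(τ² + 1/ρ)))` equals `log₂ b`,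
provided the denominator of `φ` is positive. -/
theorem zf_rate_gap_solution (ρ β b : ℝ) (hρ : 0 < ρ) (hβ : 1 < β) (hb : 1 < b)
    (hden : 0 < 1 - b + (β - 1) * (ρ + b)) :
    let φ := (b - 1) * (1 + ρ * (β - 1)) / (1 - b + (β - 1) * (ρ + b))
    let τsq := φ / ρ
    Real.logb 2 ((1 + ρ * (β - 1)) /
        (1 + (1 - τsq) * (β - 1) / (τsq + 1 / ρ))) = Real.logb 2 b := by
  intro φ τsq
  have hD : (1 - b + (β - 1) * (ρ + b)) ≠ 0 := ne_of_gt hden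
  have hρ' : ρ ≠ 0 := ne_of_gt hρ
  have hnum : 0 < 1 + ρ * (β - 1) := by nlinarith
  have hφ : 0 < φ := by
    apply div_pos _ hden
    nlinarith
  have hτ : 0 < τsq := div_pos hφ hρ
  have hS : (0:ℝ) < τsq + 1 / ρ := by positivity
  have hS' : τsq + 1 / ρ ≠ 0 := ne_of_gt hS
  have key' : (1 + ρ * (β - 1)) * (τsq + 1 / ρ)
      = b * ((τsq + 1 / ρ) + (1 - τsq) * (β - 1)) := by
    show (1 + ρ * (β - 1)) * ((b - 1) * (1 + ρ * (β - 1)) / (1 - b + (β - 1) * (ρ + b)) / ρ + 1 / ρ)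
      = b * (((b - 1) * (1 + ρ * (β - 1)) / (1 - b + (β - 1) * (ρ + b)) / ρ + 1 / ρ)
          + (1 - (b - 1) * (1 + ρ * (β - 1)) / (1 - b + (β - 1) * (ρ + b)) / ρ) * (β - 1))
    field_simp
    ring
  have key : 1 + ρ * (β - 1) = b * (1 + (1 - τsq) * (β - 1) / (τsq + 1 / ρ)) := by
    have h := key'
    field_simp at h ⊢
    linarith
  have hdenE : 1 + (1 - τsq) * (β - 1) / (τsq + 1 / ρ) ≠ 0 := by
    intro h; rw [h, mul_zero] at key; linarith
  congr 1
  rw [key]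
  exact mul_div_cancel_right₀ b hdenE
end

section
/- Let a > 1 and set x = (a−1)/e ∈ (0,∞). Let W(x) be the principal branch of the Lambert W function (the unique w ≥ −1 with w·e^w = x). Then β* = (1 − 1/a)(1 + 1/W(x)) is the unique β > 1 solving aβ/(1 + a(β−1)) = ln(1 + a(β−1))/ln 2 · ln 2, i.e. aβ/(1 + a(β−1)) = ln(1 + a(β−1)). Moreover lim_{a→1⁺} β* = e. -/
open Filter Set

lemma lamW_unique {w1 w2 : ℝ} (h1 : 0 < w1) (h2 : 0 < w2)
    (h : w1 * Real.exp w1 = w2 * Real.exp w2) : w1 = w2 := by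
  rcases lt_trichotomy w1 w2 with hl | he | hl
  · nlinarith [Real.exp_lt_exp.2 hl, Real.exp_pos w1, Real.exp_pos w2]
  · exact he
  · nlinarith [Real.exp_lt_exp.2 hl, Real.exp_pos w1, Real.exp_pos w2]

/-- Proposition 2 (optimal ZF user load via Lambert W): let `W` be the (principal branch of the)
Lambert W function, characterized on `(0,∞)` by `W x > 0` and `W x · e^{W x} = x`.
For `a > 1` and `x = (a−1)/e`, `β* = (1 − 1/a)(1 + 1/W(x))` is the unique `β > 1` solving
`aβ/(1 + a(β−1)) = ln(1 + a(β−1))`; moreover `β* → e` as `a → 1⁺`. -/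
theorem zf_optimal_load_lambertW (W : ℝ → ℝ)
    (hW : ∀ x : ℝ, 0 < x → 0 < W x ∧ W x * Real.exp (W x) = x) :
    (∀ a : ℝ, 1 < a →
      ∀ β : ℝ, 1 < β →
        (a * β / (1 + a * (β - 1)) = Real.log (1 + a * (β - 1)) ↔
          β = (1 - 1 / a) * (1 + 1 / W ((a - 1) / Real.exp 1)))) ∧
    Tendsto (fun a : ℝ => (1 - 1 / a) * (1 + 1 / W ((a - 1) / Real.exp 1)))
      (nhdsWithin 1 (Ioi 1)) (nhds (Real.exp 1)) := by
  have hWfact : ∀ a : ℝ, 1 < a →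
      0 < W ((a - 1) / Real.exp 1) ∧
      W ((a - 1) / Real.exp 1) * Real.exp (W ((a - 1) / Real.exp 1)) = (a - 1) / Real.exp 1 :=
    fun a ha => hW _ (div_pos (by linarith) (Real.exp_pos 1))
  constructor
  · intro a ha β hβ
    obtain ⟨hwpos, hwe⟩ := hWfact a ha
    set w := W ((a - 1) / Real.exp 1) with hwdef
    have ha0 : (0:ℝ) < a := by linarith
    have ht1 : (1:ℝ) < 1 + a * (β - 1) := by nlinarith
    have ht0 : (0:ℝ) < 1 + a * (β - 1) := by linarith
    set t := 1 + a * (β - 1) with htdef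
    have hexp1 : (0:ℝ) < Real.exp 1 := Real.exp_pos 1
    -- exp w = (a-1)/(e*w)
    have hEw : Real.exp (w + 1) = (a - 1) / w := by
      rw [Real.exp_add]
      field_simp at hwe ⊢
      nlinarith [hwe]
    constructor
    · intro heq
      have h1 : a * β = t * Real.log t := by
        field_simp at heq
        linarith [heq]
      have h2 : t * (Real.log t - 1) = a - 1 := by nlinarith
      have h3 : 0 < Real.log t - 1 := by
        by_contra h
        push_neg at h
        nlinarith
      have hue : (Real.log t - 1) * Real.exp (Real.log t - 1) = (a - 1) / Real.exp 1 := by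
        rw [Real.exp_sub, Real.exp_log ht0]
        field_simp
        nlinarith
      have huw : Real.log t - 1 = w := lamW_unique h3 hwpos (by rw [hue, ← hwe])
      have htw : t * w = a - 1 := by rw [← huw]; linarith [h2]
      have hwne : w ≠ 0 := ne_of_gt hwpos
      field_simp
      nlinarith [htw]
    · intro hβeq
      have hwne : w ≠ 0 := ne_of_gt hwpos
      have htw : t = (a - 1) / w := by
        rw [htdef, hβeq]
        field_simp
        ring
      have hlt : Real.log t = w + 1 := by
        rw [htw, ← hEw, Real.log_exp]
      rw [hlt]
      rw [eq_comm, eq_div_iff (ne_of_gt ht0)]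
      have : t * w = a - 1 := by
        rw [htw]; field_simp
      nlinarith [this]
  · -- limit part
    have hW0 : Tendsto (fun a : ℝ => W ((a - 1) / Real.exp 1))
        (nhdsWithin 1 (Ioi 1)) (nhds 0) := by
      have hup : Tendsto (fun a : ℝ => (a - 1) / Real.exp 1)
          (nhdsWithin 1 (Ioi 1)) (nhds 0) := by
        have : Tendsto (fun a : ℝ => (a - 1) / Real.exp 1) (nhds 1) (nhds ((1 - 1) / Real.exp 1)) :=
          Continuous.tendsto (by continuity) 1
        simpa using this.mono_left nhdsWithin_le_nhds
      refine tendsto_of_tendsto_of_tendsto_of_le_of_le' tendsto_const_nhds hup ?_ ?_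
      · filter_upwards [self_mem_nhdsWithin] with a (ha : 1 < a)
        exact (hWfact a ha).1.le
      · filter_upwards [self_mem_nhdsWithin] with a (ha : 1 < a)
        obtain ⟨hwpos, hwe⟩ := hWfact a ha
        nlinarith [Real.one_le_exp (le_of_lt hwpos)]
    have hcongr : ∀ a : ℝ, 1 < a →
        (1 - 1 / a) * (1 + 1 / W ((a - 1) / Real.exp 1)) =
        (a - 1) / a + Real.exp 1 * Real.exp (W ((a - 1) / Real.exp 1)) / a := by
      intro a ha
      obtain ⟨hwpos, hwe⟩ := hWfact a ha
      have hwne : W ((a - 1) / Real.exp 1) ≠ 0 := ne_of_gt hwpos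
      have ha0 : a ≠ 0 := by positivity
      have hE : Real.exp 1 * Real.exp (W ((a - 1) / Real.exp 1)) = (a - 1) / W ((a - 1) / Real.exp 1) := by
        field_simp at hwe ⊢
        nlinarith [hwe]
      rw [hE]
      field_simp
    have hmain : Tendsto (fun a : ℝ => (a - 1) / a + Real.exp 1 * Real.exp (W ((a - 1) / Real.exp 1)) / a)
        (nhdsWithin 1 (Ioi 1)) (nhds (Real.exp 1)) := by
      have h1 : Tendsto (fun a : ℝ => (a - 1) / a) (nhdsWithin 1 (Ioi 1)) (nhds 0) := by
        have : Tendsto (fun a : ℝ => (a - 1) / a) (nhds 1) (nhds ((1 - 1) / 1)) := by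
          exact Tendsto.div ((continuous_id.sub continuous_const).tendsto 1) (continuous_id.tendsto 1) one_ne_zero
        simpa using this.mono_left nhdsWithin_le_nhds
      have h2 : Tendsto (fun a : ℝ => Real.exp (W ((a - 1) / Real.exp 1)))
          (nhdsWithin 1 (Ioi 1)) (nhds 1) := by
        have := (Real.continuous_exp.tendsto 0).comp hW0
        simpa [Function.comp_def] using this
      have h3 : Tendsto (fun a : ℝ => (a:ℝ)) (nhdsWithin 1 (Ioi 1)) (nhds 1) :=
        tendsto_id.mono_left nhdsWithin_le_nhds
      have h4 : Tendsto (fun a : ℝ => Real.exp 1 * Real.exp (W ((a - 1) / Real.exp 1)) / a)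
          (nhdsWithin 1 (Ioi 1)) (nhds (Real.exp 1 * 1 / 1)) :=
        ((tendsto_const_nhds.mul h2).div h3 one_ne_zero)
      have := h1.add h4
      simpa using this
    refine hmain.congr' ?_
    filter_upwards [self_mem_nhdsWithin] with a (ha : 1 < a)
    exact (hcongr a ha).symm
end

section
/- Let T > 0, K > 0 with K ≤ T/2, and constants c₁, c₂, c₃ > 0. The function f(t) = (1 − t/T)·log₂(1 + c₁t/(1 + c₂t + c₃)) is strictly concave on [K, T]. -/
open Set

set_option maxHeartbeats 2000000 in
/-- Strict concavity of the normalized ZF sum rate in the training length: for `T > 0`,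
`0 < K ≤ T/2` and constants `c₁, c₂, c₃ > 0`, the function
`t ↦ (1 − t/T) log₂(1 + c₁ t/(1 + c₂ t + c₃))` is strictly concave on `[K, T]`. -/
theorem zf_training_rate_strict_concave (T K c₁ c₂ c₃ : ℝ)
    (hT : 0 < T) (hK : 0 < K) (hKT : K ≤ T / 2)
    (hc₁ : 0 < c₁) (hc₂ : 0 < c₂) (hc₃ : 0 < c₃) :
    StrictConcaveOn ℝ (Icc K T)
      (fun t => (1 - t / T) * Real.logb 2 (1 + c₁ * t / (1 + c₂ * t + c₃))) := by
  constructor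
  · exact convex_Icc K T
  intro x hx y hy hne a b ha hb hab
  have hb1 : b = 1 - a := by linarith
  subst hb1
  simp only [smul_eq_mul]
  have hx0 : 0 < x := hK.trans_le hx.1
  have hy0 : 0 < y := hK.trans_le hy.1
  set b : ℝ := 1 - a with hbdef
  have hz0 : 0 < a * x + b * y := by positivity
  have hDx : 0 < 1 + c₂ * x + c₃ := by positivity
  have hDy : 0 < 1 + c₂ * y + c₃ := by positivity
  have hDz : 0 < 1 + c₂ * (a * x + b * y) + c₃ := by positivity
  have hrx0 : (0:ℝ) < 1 + c₁ * x / (1 + c₂ * x + c₃) := by positivity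
  have hry0 : (0:ℝ) < 1 + c₁ * y / (1 + c₂ * y + c₃) := by positivity
  -- the convex combination is strictly below T
  have hzT : a * x + b * y < T := by
    rcases hne.lt_or_gt with h | h
    · calc a * x + b * y < a * y + b * y := by nlinarith
        _ = y := by ring
        _ ≤ T := hy.2
    · calc a * x + b * y < a * x + b * x := by nlinarith
        _ = x := by ring
        _ ≤ T := hx.2
  have hhz : 0 < 1 - (a * x + b * y) / T := by
    rw [sub_pos, div_lt_one hT]; exact hzT
  -- strict concavity of the inner rational function
  have key1 : a * (1 + c₁ * x / (1 + c₂ * x + c₃)) + b * (1 + c₁ * y / (1 + c₂ * y + c₃))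
      < 1 + c₁ * (a * x + b * y) / (1 + c₂ * (a * x + b * y) + c₃) := by
    rw [← sub_pos]
    have iden : 1 + c₁ * (a * x + b * y) / (1 + c₂ * (a * x + b * y) + c₃)
        - (a * (1 + c₁ * x / (1 + c₂ * x + c₃)) + b * (1 + c₁ * y / (1 + c₂ * y + c₃)))
        = c₁ * a * b * c₂ * (1 + c₃) * (x - y) ^ 2
          / ((1 + c₂ * x + c₃) * (1 + c₂ * y + c₃) * (1 + c₂ * (a * x + b * y) + c₃)) := by
      rw [hbdef]
      have hDz' : 1 + c₂ * (a * x + (1 - a) * y) + c₃ ≠ 0 := by rw [← hbdef]; exact hDz.ne'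
      have h1 := hDx.ne'
      have h2 := hDy.ne'
      generalize hX : 1 + c₂ * x + c₃ = X at h1 ⊢
      generalize hY : 1 + c₂ * y + c₃ = Y at h2 ⊢
      generalize hD : 1 + c₂ * (a * x + (1 - a) * y) + c₃ = D at hDz' ⊢
      field_simp
      subst hX hY hD
      ring
    rw [iden]
    have hxy2 : 0 < (x - y) ^ 2 := by
      have h' : x - y ≠ 0 := sub_ne_zero.mpr hne
      positivity
    have hbpos : 0 < b := hb
    positivity
  -- strict concavity of `logb 2` of the inner function
  have key2 : a * Real.logb 2 (1 + c₁ * x / (1 + c₂ * x + c₃))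
      + b * Real.logb 2 (1 + c₁ * y / (1 + c₂ * y + c₃))
      < Real.logb 2 (1 + c₁ * (a * x + b * y) / (1 + c₂ * (a * x + b * y) + c₃)) := by
    have hcomb : (0:ℝ) < a * (1 + c₁ * x / (1 + c₂ * x + c₃))
        + b * (1 + c₁ * y / (1 + c₂ * y + c₃)) := by positivity
    have hcc := (strictConcaveOn_log_Ioi.concaveOn).2 (mem_Ioi.mpr hrx0) (mem_Ioi.mpr hry0)
      ha.le hb.le hab
    simp only [smul_eq_mul] at hcc
    have hlog2 : (0:ℝ) < Real.log 2 := Real.log_pos one_lt_two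
    have hfin : a * Real.log (1 + c₁ * x / (1 + c₂ * x + c₃))
        + b * Real.log (1 + c₁ * y / (1 + c₂ * y + c₃))
        < Real.log (1 + c₁ * (a * x + b * y) / (1 + c₂ * (a * x + b * y) + c₃)) :=
      lt_of_le_of_lt hcc (Real.log_lt_log hcomb key1)
    simp only [Real.logb]
    calc a * (Real.log (1 + c₁ * x / (1 + c₂ * x + c₃)) / Real.log 2)
        + b * (Real.log (1 + c₁ * y / (1 + c₂ * y + c₃)) / Real.log 2)
        = (a * Real.log (1 + c₁ * x / (1 + c₂ * x + c₃))
          + b * Real.log (1 + c₁ * y / (1 + c₂ * y + c₃))) / Real.log 2 := by ring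
      _ < Real.log (1 + c₁ * (a * x + b * y) / (1 + c₂ * (a * x + b * y) + c₃))
          / Real.log 2 := by
          exact (div_lt_div_iff_of_pos_right hlog2).mpr hfin
  -- nonnegativity of the log factor
  have hgx0 : 0 ≤ Real.logb 2 (1 + c₁ * x / (1 + c₂ * x + c₃)) := by
    apply Real.logb_nonneg one_lt_two
    have h' : 0 ≤ c₁ * x / (1 + c₂ * x + c₃) := by positivity
    linarith
  have hgy0 : 0 ≤ Real.logb 2 (1 + c₁ * y / (1 + c₂ * y + c₃)) := by
    apply Real.logb_nonneg one_lt_two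
    have h' : 0 ≤ c₁ * y / (1 + c₂ * y + c₃) := by positivity
    linarith
  -- monotonicity cross term
  have hmono : 0 ≤ (y - x) * (Real.logb 2 (1 + c₁ * y / (1 + c₂ * y + c₃))
      - Real.logb 2 (1 + c₁ * x / (1 + c₂ * x + c₃))) := by
    rcases le_total x y with h | h
    · have hinner : c₁ * x / (1 + c₂ * x + c₃) ≤ c₁ * y / (1 + c₂ * y + c₃) := by
        rw [div_le_div_iff₀ hDx hDy]
        nlinarith [mul_nonneg (mul_nonneg hc₁.le (sub_nonneg.mpr h)) hc₃.le]
      have hlb := Real.logb_le_logb_of_le one_lt_two hrx0 (by linarith : 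
        1 + c₁ * x / (1 + c₂ * x + c₃) ≤ 1 + c₁ * y / (1 + c₂ * y + c₃))
      have h1 : 0 ≤ y - x := by linarith
      exact mul_nonneg h1 (by linarith)
    · have hinner : c₁ * y / (1 + c₂ * y + c₃) ≤ c₁ * x / (1 + c₂ * x + c₃) := by
        rw [div_le_div_iff₀ hDy hDx]
        nlinarith [mul_nonneg (mul_nonneg hc₁.le (sub_nonneg.mpr h)) hc₃.le]
      have hlb := Real.logb_le_logb_of_le one_lt_two hry0 (by linarith :
        1 + c₁ * y / (1 + c₂ * y + c₃) ≤ 1 + c₁ * x / (1 + c₂ * x + c₃))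
      have h1 : (0:ℝ) ≤ -(y - x) := by linarith
      have h2 : (0:ℝ) ≤ -(Real.logb 2 (1 + c₁ * y / (1 + c₂ * y + c₃))
        - Real.logb 2 (1 + c₁ * x / (1 + c₂ * x + c₃))) := by linarith
      nlinarith [mul_nonneg h1 h2]
  -- final assembly
  have hT' : (0:ℝ) ≤ 1 / T := by positivity
  calc a * ((1 - x / T) * Real.logb 2 (1 + c₁ * x / (1 + c₂ * x + c₃)))
      + b * ((1 - y / T) * Real.logb 2 (1 + c₁ * y / (1 + c₂ * y + c₃)))
      ≤ (a * (1 - x / T) + b * (1 - y / T))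
        * (a * Real.logb 2 (1 + c₁ * x / (1 + c₂ * x + c₃))
          + b * Real.logb 2 (1 + c₁ * y / (1 + c₂ * y + c₃))) := by
        have iden2 : (a * (1 - x / T) + b * (1 - y / T))
            * (a * Real.logb 2 (1 + c₁ * x / (1 + c₂ * x + c₃))
              + b * Real.logb 2 (1 + c₁ * y / (1 + c₂ * y + c₃)))
            - (a * ((1 - x / T) * Real.logb 2 (1 + c₁ * x / (1 + c₂ * x + c₃)))
              + b * ((1 - y / T) * Real.logb 2 (1 + c₁ * y / (1 + c₂ * y + c₃))))
            = a * b * (1 / T) * ((y - x) * (Real.logb 2 (1 + c₁ * y / (1 + c₂ * y + c₃))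
              - Real.logb 2 (1 + c₁ * x / (1 + c₂ * x + c₃)))) := by
          rw [hbdef]; ring
        nlinarith [mul_nonneg (mul_nonneg (mul_pos ha hb).le hT') hmono]
    _ = (1 - (a * x + b * y) / T)
        * (a * Real.logb 2 (1 + c₁ * x / (1 + c₂ * x + c₃))
          + b * Real.logb 2 (1 + c₁ * y / (1 + c₂ * y + c₃))) := by
        rw [hbdef]; ring
    _ < (1 - (a * x + b * y) / T)
        * Real.logb 2 (1 + c₁ * (a * x + b * y) / (1 + c₂ * (a * x + b * y) + c₃)) :=
      mul_lt_mul_of_pos_left key2 hhz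
end
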